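/- For real x and y with y > 0 and −y < x < y, x R_C(y², y² − x²) = artanh(x/y). -/

import Mathlib

open MeasureTheory Real Filter Set Topology

lemma key (x y : ℝ) (hy : 0 < y) (hx : 0 < x) (h2 : x < y) :
    ∫ t in Set.Ioi (0:ℝ), x * ((Real.sqrt (t + y ^ 2))⁻¹ * (t + (y ^ 2 - x ^ 2))⁻¹)
      = Real.log ((y + x) / (y - x)) := by
  set F : ℝ → ℝ := fun t => Real.log ((Real.sqrt (t + y ^ 2) - x) / (Real.sqrt (t + y ^ 2) + x))
  have hs : ∀ t : ℝ, 0 ≤ t → x < Real.sqrt (t + y ^ 2) := by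
    intro t ht
    have : y ≤ Real.sqrt (t + y ^ 2) :=
      le_trans (le_of_eq (Real.sqrt_sq hy.le).symm) (Real.sqrt_le_sqrt (by linarith))
    linarith
  have hderiv : ∀ t ∈ Set.Ici (0:ℝ),
      HasDerivAt F (x * ((Real.sqrt (t + y ^ 2))⁻¹ * (t + (y ^ 2 - x ^ 2))⁻¹)) t := by
    intro t ht
    have ht0 : (0:ℝ) ≤ t := ht
    have hty : 0 < t + y ^ 2 := by positivity
    set s := Real.sqrt (t + y ^ 2) with hsdef
    have hs2 : s ^ 2 = t + y ^ 2 := Real.sq_sqrt hty.le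
    have hxs : x < s := hs t ht0
    have hs0 : 0 < s := lt_trans hx hxs
    have h1 : HasDerivAt (fun t : ℝ => Real.sqrt (t + y ^ 2)) (1 / (2 * s)) t := by
      have := (Real.hasDerivAt_sqrt hty.ne').comp t ((hasDerivAt_id t).add_const (y ^ 2))
      simpa [Function.comp_def, ← hsdef] using this
    have h2' : HasDerivAt (fun t : ℝ => (Real.sqrt (t + y ^ 2) - x) / (Real.sqrt (t + y ^ 2) + x))
        ((1 / (2 * s) * (s + x) - (s - x) * (1 / (2 * s))) / (s + x) ^ 2) t :=
      ((h1.sub_const x).div (h1.add_const x) (by linarith))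
    have h3 : HasDerivAt F
        (((1 / (2 * s) * (s + x) - (s - x) * (1 / (2 * s))) / (s + x) ^ 2) / ((s - x) / (s + x))) t := by
      apply h2'.log
      exact (div_pos (by linarith) (by linarith)).ne' 
    convert h3 using 1
    have hsx : s - x ≠ 0 := by linarith
    have hsx' : s + x ≠ 0 := by linarith
    have : t + (y ^ 2 - x ^ 2) = (s - x) * (s + x) := by ring_nf; nlinarith [hs2]
    rw [this]
    field_simp
    ring
  have hF0 : Tendsto F atTop (𝓝 0) := by
    have hsq : Tendsto Real.sqrt atTop atTop := by
      apply tendsto_atTop_atTop.2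
      intro b
      exact ⟨(max b 0) ^ 2, fun a ha => le_trans (le_max_left b 0)
        (le_trans (le_of_eq (Real.sqrt_sq (le_max_right b 0)).symm) (Real.sqrt_le_sqrt ha))⟩
    have hst : Tendsto (fun t : ℝ => Real.sqrt (t + y ^ 2)) atTop atTop :=
      hsq.comp (tendsto_atTop_add_const_right _ _ tendsto_id)
    have hratio : Tendsto (fun s : ℝ => (s - x) / (s + x)) atTop (𝓝 1) := by
      have : (fun s : ℝ => (s - x) / (s + x)) =ᶠ[atTop] fun s => (1 - x / s) / (1 + x / s) := by
        filter_upwards [eventually_gt_atTop (0:ℝ), eventually_gt_atTop x] with s hs0 hsx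
        field_simp
      rw [tendsto_congr' this]
      have hx0 : Tendsto (fun s : ℝ => x / s) atTop (𝓝 0) := tendsto_const_nhds.div_atTop tendsto_id
      have hlim : Tendsto (fun s : ℝ => (1 - x / s) / (1 + x / s)) atTop
          (𝓝 ((1 - 0) / (1 + 0))) :=
        (tendsto_const_nhds.sub hx0).div (tendsto_const_nhds.add hx0) (by norm_num)
      simpa using hlim
    have := (Real.continuousAt_log (by norm_num : (1:ℝ) ≠ 0)).tendsto.comp (hratio.comp hst)
    simpa [F, Function.comp_def, Real.log_one] using this
  have hpos : ∀ t ∈ Set.Ioi (0:ℝ),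
      0 ≤ x * ((Real.sqrt (t + y ^ 2))⁻¹ * (t + (y ^ 2 - x ^ 2))⁻¹) := by
    intro t ht
    have ht0 : (0:ℝ) < t := ht
    have h1 : 0 < t + (y ^ 2 - x ^ 2) := by nlinarith
    positivity
  rw [integral_Ioi_of_hasDerivAt_of_nonneg' hderiv hpos hF0]
  have : Real.sqrt (0 + y ^ 2) = y := by rw [zero_add, Real.sqrt_sq hy.le]
  simp only [F, this, zero_sub]
  rw [← Real.log_inv]
  congr 1
  rw [inv_div]

noncomputable def RC (x y : ℝ) : ℝ :=
  (1/2) * ∫ t in Set.Ioi (0:ℝ), (Real.sqrt (t + x))⁻¹ * (t + y)⁻¹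

noncomputable def RF (x y z : ℝ) : ℝ :=
  (1/2) * ∫ t in Set.Ioi (0:ℝ), (Real.sqrt ((t + x) * (t + y) * (t + z)))⁻¹

noncomputable def RD (x y z : ℝ) : ℝ :=
  (3/2) * ∫ t in Set.Ioi (0:ℝ),
    (Real.sqrt ((t + x) * (t + y)))⁻¹ * ((t + z) * Real.sqrt (t + z))⁻¹

noncomputable def RJ (x y z p : ℝ) : ℝ :=
  (3/2) * ∫ t in Set.Ioi (0:ℝ),
    (Real.sqrt ((t + x) * (t + y) * (t + z)))⁻¹ * (t + p)⁻¹

noncomputable def RG (x y z : ℝ) : ℝ :=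
  (1/4) * ∫ t in Set.Ioi (0:ℝ),
    (Real.sqrt ((t + x) * (t + y) * (t + z)))⁻¹ *
      (x / (t + x) + y / (t + y) + z / (t + z)) * t

theorem stmt4 (x y : ℝ) (hy : 0 < y) (h1 : -y < x) (h2 : x < y) :
    x * RC (y ^ 2) (y ^ 2 - x ^ 2) = (1/2) * Real.log ((1 + x / y) / (1 - x / y)) := by
  have hyx1 : 0 < y + x := by linarith
  have hyx2 : 0 < y - x := by linarith
  have hne : (1:ℝ) - x / y ≠ 0 := by
    have : x / y < 1 := (div_lt_one hy).2 h2
    linarith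
  have hratio : (1 + x / y) / (1 - x / y) = (y + x) / (y - x) := by
    rw [div_eq_div_iff hne hyx2.ne']
    field_simp
  rw [hratio]
  have hL : x * RC (y ^ 2) (y ^ 2 - x ^ 2)
      = (1/2) * ∫ t in Set.Ioi (0:ℝ),
          x * ((Real.sqrt (t + y ^ 2))⁻¹ * (t + (y ^ 2 - x ^ 2))⁻¹) := by
    rw [RC, MeasureTheory.integral_const_mul]
    ring
  rw [hL]
  rcases lt_trichotomy x 0 with hx | hx | hx
  · have hk := key (-x) y hy (by linarith) (by linarith)
    simp only [neg_sq] at hk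
    have : (∫ t in Set.Ioi (0:ℝ),
        x * ((Real.sqrt (t + y ^ 2))⁻¹ * (t + (y ^ 2 - x ^ 2))⁻¹))
        = -(∫ t in Set.Ioi (0:ℝ),
            (-x) * ((Real.sqrt (t + y ^ 2))⁻¹ * (t + (y ^ 2 - x ^ 2))⁻¹)) := by
      rw [← MeasureTheory.integral_neg]
      congr 1
      ext t
      ring
    rw [this, hk, ← Real.log_inv, inv_div]
    ring_nf
  · subst hx
    simp [div_self hy.ne']
  · rw [key x y hy hx h2]
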